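/- Let k ≥ 1 be an odd integer. Then there is no linearised polynomial B(X) = Σ_{i ≥ 0} a_i X^{2^i} over F_2 (with a_i ∈ F_2, all but finitely many zero) satisfying both B(1) = 0 and B(X)^2 + B(X) = X^{2^k} + X in F_2[X]. -/

import Mathlib

open Polynomial Finset

/-- For odd `k ≥ 1`, there is no linearised polynomial
`B = Σ_{i=0}^{N} a_i X^{2^i}` over `F_2` with both `B(1) = 0` and
`B² + B = X^{2^k} + X` in `F_2[X]`. -/
theorem stmt_10 (k : ℕ) (hk : 1 ≤ k) (hodd : Odd k) :
    ¬ ∃ (N : ℕ) (a : ℕ → ZMod 2) (B : Polynomial (ZMod 2)),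
      B = (∑ i ∈ range (N + 1), C (a i) * X ^ (2 ^ i)) ∧
      B.eval 1 = 0 ∧
      B ^ 2 + B = X ^ (2 ^ k) + X := by
  rintro ⟨N, a, B, hB, heval, heq⟩
  have zmod0 : ∀ x : ZMod 2, 1 + x = 1 → x = 0 := by decide
  have zmod1 : ∀ x : ZMod 2, 1 + x = 0 → x = 1 := by decide
  have powinj : Function.Injective (fun i : ℕ => 2 ^ i) :=
    fun i j h => Nat.pow_right_injective le_rfl h
  -- coefficients of B at powers of two
  have hcoeff : ∀ j, B.coeff (2 ^ j) = if j ≤ N then a j else 0 := by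
    intro j
    rw [hB, finset_sum_coeff]
    simp only [coeff_C_mul, coeff_X_pow]
    have key : ∀ i ∈ range (N + 1),
        a i * (if (2:ℕ) ^ j = 2 ^ i then (1 : ZMod 2) else 0)
          = if i = j then a i else 0 := by
      intro i _
      by_cases h : i = j
      · subst h; simp
      · rw [if_neg h, if_neg (fun hh => h (powinj hh.symm)), mul_zero]
    rw [Finset.sum_congr rfl key, Finset.sum_ite_eq' (range (N + 1)) j a]
    simp [Nat.lt_succ_iff]
  -- B ^ 2 = expand 2 B
  have hsq : B ^ 2 = expand (ZMod 2) 2 B := by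
    have h := Polynomial.map_frobenius_expand 2 B
    rwa [ZMod.frobenius_zmod, Polynomial.map_id, eq_comm] at h
  have hsqcoeff : ∀ j, (B ^ 2).coeff (2 ^ (j + 1)) = B.coeff (2 ^ j) := by
    intro j
    rw [hsq, Polynomial.coeff_expand (by norm_num : 0 < 2)]
    rw [pow_succ]
    simp [Nat.mul_div_cancel]
  have hsq1 : (B ^ 2).coeff 1 = 0 := by
    rw [hsq, Polynomial.coeff_expand (by norm_num : 0 < 2)]
    norm_num
  have h2k1 : (1:ℕ) ≠ 2 ^ k := by
    have : (1:ℕ) < 2 ^ k := Nat.one_lt_two_pow (by omega)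
    omega
  -- base case
  have hbase : B.coeff 1 = 1 := by
    have h := congrArg (fun p : Polynomial (ZMod 2) => p.coeff 1) heq
    simp only [coeff_add, coeff_X_pow, coeff_X_one] at h
    rw [hsq1, if_neg h2k1] at h
    simpa using h
  -- the key recurrence
  have hrec : ∀ j, B.coeff (2 ^ j) + B.coeff (2 ^ (j + 1))
      = if j + 1 = k then 1 else 0 := by
    intro j
    have h := congrArg (fun p : Polynomial (ZMod 2) => p.coeff (2 ^ (j + 1))) heq
    simp only [coeff_add, coeff_X_pow, coeff_X] at h
    rw [hsqcoeff j] at h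
    have hne1 : ¬ (1 = 2 ^ (j + 1)) := by
      have : (1:ℕ) < 2 ^ (j + 1) := Nat.one_lt_two_pow (by omega)
      omega
    rw [if_neg hne1, add_zero] at h
    rw [h]
    by_cases hj : j + 1 = k
    · rw [if_pos (by rw [hj]), if_pos hj]
    · rw [if_neg (fun hc => hj (powinj hc)), if_neg hj]
  -- coefficients below k are 1
  have hone : ∀ j, j < k → B.coeff (2 ^ j) = 1 := by
    intro j
    induction j with
    | zero => intro _; simpa using hbase
    | succ n ih =>
      intro hlt
      have h := hrec n
      rw [if_neg (by omega), ih (by omega)] at h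
      exact zmod1 _ h
  -- coefficients at k and above are 0
  have hzero : ∀ j, k ≤ j → B.coeff (2 ^ j) = 0 := by
    intro j
    induction j with
    | zero => intro h; omega
    | succ n ih =>
      intro hle
      rcases Nat.lt_or_ge n k with hn | hn
      · -- n + 1 = k
        have hnk : n + 1 = k := by omega
        have h := hrec n
        rw [if_pos hnk, hone n (by omega)] at h
        exact zmod0 _ h
      · have h := hrec n
        rw [if_neg (by omega), ih hn] at h
        simpa using h
  -- k ≤ N + 1
  have hkN : k ≤ N + 1 := by
    by_contra hcon
    have h1 := hone N (by omega)
    rw [hcoeff N, if_pos le_rfl] at h1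
    have h2 := hone (N + 1) (by omega)
    rw [hcoeff (N + 1), if_neg (by omega)] at h2
    exact one_ne_zero h2.symm
  -- evaluate at 1
  have heval1 : B.eval 1 = ∑ i ∈ range (N + 1), a i := by
    rw [hB, eval_finset_sum]
    simp
  have havals : ∀ i ∈ range (N + 1), a i = if i < k then (1 : ZMod 2) else 0 := by
    intro i hi
    rw [mem_range] at hi
    have h := hcoeff i
    rw [if_pos (by omega)] at h
    by_cases hik : i < k
    · rw [if_pos hik, ← h, hone i hik]
    · rw [if_neg hik, ← h, hzero i (by omega)]
  rw [heval1, Finset.sum_congr rfl havals] at heval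
  rw [Finset.range_eq_Ico, ← Finset.sum_Ico_consecutive _ (Nat.zero_le k) hkN] at heval
  rw [Finset.sum_congr rfl (fun i hi => if_pos (by rw [Finset.mem_Ico] at hi; omega)),
      Finset.sum_congr rfl (g := fun _ => (0 : ZMod 2))
        (fun i hi => if_neg (by rw [Finset.mem_Ico] at hi; omega)),
      Finset.sum_const, Finset.sum_const_zero, add_zero, Nat.card_Ico, Nat.sub_zero,
      nsmul_eq_mul, mul_one] at heval
  obtain ⟨m, hm⟩ := hodd
  rw [hm] at heval
  push_cast at heval
  have h2 : (2 : ZMod 2) = 0 := rfl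
  rw [h2, zero_mul, zero_add] at heval
  exact one_ne_zero heval
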